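/- For integers j ≤ n with j, n ≥ 0, the binomial coefficient C(n, j) equals the alternating sum over i from 0 to j of (-1)^i * (n + j - 2i)/(n - i) * C(n - i, j - i), where the term for i = j = n is interpreted as (-1)^j. -/

import Mathlib

open Finset

/-- For integers `j ≤ n`, `C(n, j) = ∑_{i=0}^{j} (-1)^i * (n + j - 2i)/(n - i) * C(n - i, j - i)`,
where the term for `i = j = n` is interpreted as `(-1)^j`. -/
theorem stmt0 (n j : ℕ) (h : j ≤ n) :
    (Nat.choose n j : ℚ) =
      ∑ i ∈ Finset.range (j + 1),
        if i = n then (-1 : ℚ) ^ j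
        else (-1 : ℚ) ^ i * (((n : ℚ) + j - 2 * i) / ((n : ℚ) - i)) *
          (Nat.choose (n - i) (j - i) : ℚ) := by
  set b : ℕ → ℚ := fun i => (-1 : ℚ) ^ i *
      (if i ≤ j then (Nat.choose (n - i) (j - i) : ℚ) else 0) with hb
  have key : ∀ i ∈ Finset.range (j + 1),
      (if i = n then (-1 : ℚ) ^ j
        else (-1 : ℚ) ^ i * (((n : ℚ) + j - 2 * i) / ((n : ℚ) - i)) *
          (Nat.choose (n - i) (j - i) : ℚ)) = b i - b (i + 1) := by
    intro i hi
    rw [Finset.mem_range] at hi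
    have hij : i ≤ j := Nat.lt_succ_iff.mp hi
    rcases eq_or_lt_of_le hij with rfl | hlt
    · -- i = j
      by_cases hjn : i = n
      · subst hjn
        simp [hb, Nat.lt_irrefl]
      · have hjn' : i < n := lt_of_le_of_ne h hjn
        have hne : (n : ℚ) - i ≠ 0 := by
          have : (i : ℚ) < n := by exact_mod_cast hjn'
          intro hc; linarith
        simp only [hb, if_pos (le_refl i), if_neg (Nat.not_succ_le_self i),
          if_neg hjn, Nat.sub_self, Nat.choose_zero_right]
        push_cast
        have : (n : ℚ) + i - 2 * i = (n : ℚ) - i := by ring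
        rw [this, div_self hne]
        ring
    · -- i < j
      have hin : i < n := lt_of_lt_of_le hlt h
      have hne : (n : ℚ) - i ≠ 0 := by
        have : (i : ℚ) < n := by exact_mod_cast hin
        intro hc; linarith
      have hN : (n - i) * Nat.choose (n - i - 1) (j - i - 1)
          = Nat.choose (n - i) (j - i) * (j - i) := by
        obtain ⟨m, hm⟩ : ∃ m, n - i = m + 1 := ⟨n - i - 1, by omega⟩
        obtain ⟨k, hk⟩ : ∃ k, j - i = k + 1 := ⟨j - i - 1, by omega⟩
        rw [hm, hk]
        simpa using Nat.add_one_mul_choose_eq m k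
      have hNc : ((n : ℚ) - i) * (Nat.choose (n - i - 1) (j - i - 1) : ℚ)
          = (Nat.choose (n - i) (j - i) : ℚ) * ((j : ℚ) - i) := by
        have := congrArg (fun x : ℕ => (x : ℚ)) hN
        push_cast [Nat.cast_sub hin.le, Nat.cast_sub hlt.le] at this
        convert this using 2 <;> push_cast [Nat.cast_sub hin.le, Nat.cast_sub hlt.le] <;> ring
      have hne' : i ≠ n := hin.ne
      simp only [hb, if_pos hij, if_pos (Nat.succ_le_of_lt hlt), if_neg hne']
      have h1 : n - (i + 1) = n - i - 1 := by omega
      have h2 : j - (i + 1) = j - i - 1 := by omega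
      rw [h1, h2]
      field_simp
      push_cast
      ring_nf
      linear_combination (-(-1 : ℚ) ^ i) * hNc
  rw [Finset.sum_congr rfl key, Finset.sum_range_sub']
  simp [hb]
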